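/- arXiv:2605.22244 — 3 statements merged into one kernel-verified Lean document; each statement's English description precedes it below -/
import Mathlib

section
/- Let f, g : ℂ → ℂ commute, Q a non-constant complex polynomial, and Q(g(z)) = a·Q(f(z)) + b for all z, with |a| = 1 and a ≠ 1. Then I(f) = I(g): |f^n(z)| → ∞ if and only if |g^n(z)| → ∞. -/
open Filter

/-- |w n| → ∞ iff |Q(w n)| → ∞ for a nonconstant polynomial. -/
lemma tendsto_abs_iff_eval (Q : Polynomial ℂ) (hQ : 0 < Q.natDegree) (w : ℕ → ℂ) :
    Tendsto (fun n => ‖w n‖) atTop atTop ↔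
      Tendsto (fun n => ‖Q.eval (w n)‖) atTop atTop := by
  have hdeg : 0 < Q.degree := Polynomial.natDegree_pos_iff_degree_pos.mp hQ
  constructor
  · intro h
    exact Q.tendsto_norm_atTop hdeg h
  · intro h
    rw [tendsto_atTop]
    intro R
    obtain ⟨M, hM⟩ : ∃ M, ∀ x ∈ Metric.closedBall (0:ℂ) R, ‖Q.eval x‖ ≤ M := by
      obtain ⟨M, hM⟩ := (isCompact_closedBall (0:ℂ) R).bddAbove_image
        (Q.continuous.norm.continuousOn)
      exact ⟨M, fun x hx => hM ⟨x, hx, rfl⟩⟩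
    filter_upwards [h.eventually_gt_atTop M] with n hn
    by_contra hcon
    push_neg at hcon
    have : w n ∈ Metric.closedBall (0:ℂ) R := by
      simpa using hcon.le
    exact absurd (hM _ this) (not_le.mpr hn)

theorem escaping_eq_poly (f g : ℂ → ℂ) (hcomm : f ∘ g = g ∘ f)
    (Q : Polynomial ℂ) (hQ : 0 < Q.natDegree) (a b : ℂ)
    (ha : ‖a‖ = 1) (ha1 : a ≠ 1)
    (hrel : ∀ z, Q.eval (g z) = a * Q.eval (f z) + b) :
    ∀ z : ℂ,
      Filter.Tendsto (fun n => ‖f^[n] z‖) Filter.atTop Filter.atTop ↔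
      Filter.Tendsto (fun n => ‖g^[n] z‖) Filter.atTop Filter.atTop := by
  have hc : Function.Commute f g := fun z => congrFun hcomm z
  -- key identity
  have key : ∀ n z, Q.eval (g^[n] z) =
      a ^ n * Q.eval (f^[n] z) + b * ∑ k ∈ Finset.range n, a ^ k := by
    intro n
    induction n with
    | zero => intro z; simp
    | succ n ih =>
      intro z
      rw [Function.iterate_succ_apply, ih (g z)]
      have h1 : f^[n] (g z) = g (f^[n] z) := (hc.iterate_left n) z
      rw [h1, hrel, Function.iterate_succ_apply', Finset.sum_range_succ]
      ring
  -- bound on the constant term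
  set C : ℝ := ‖b‖ * (2 / ‖a - 1‖) with hC
  have hCb : ∀ n : ℕ, ‖b * ∑ k ∈ Finset.range n, a ^ k‖ ≤ C := by
    intro n
    rw [geom_sum_eq ha1, norm_mul, norm_div, hC]
    gcongr
    calc ‖a ^ n - 1‖ ≤ ‖a ^ n‖ + ‖(1:ℂ)‖ :=
          norm_sub_le _ _
      _ = 2 := by rw [norm_pow, ha]; norm_num
  -- |Q(g^n z)| ≤ |Q(f^n z)| + C and conversely
  have hbd1 : ∀ n z, ‖Q.eval (g^[n] z)‖ ≤ ‖Q.eval (f^[n] z)‖ + C := by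
    intro n z
    rw [key n z]
    calc ‖a ^ n * Q.eval (f^[n] z) + b * ∑ k ∈ Finset.range n, a ^ k‖
        ≤ ‖a ^ n * Q.eval (f^[n] z)‖
          + ‖b * ∑ k ∈ Finset.range n, a ^ k‖ := norm_add_le _ _
      _ ≤ ‖Q.eval (f^[n] z)‖ + C := by
          rw [norm_mul, norm_pow, ha, one_pow, one_mul]
          exact add_le_add_right (hCb n) _
  have hbd2 : ∀ n z, ‖Q.eval (f^[n] z)‖ ≤ ‖Q.eval (g^[n] z)‖ + C := by
    intro n z
    have hk := key n z
    have han : a ^ n ≠ 0 := pow_ne_zero n (by rintro rfl; simp at ha)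
    have : Q.eval (f^[n] z) = (Q.eval (g^[n] z) - b * ∑ k ∈ Finset.range n, a ^ k) / a ^ n := by
      field_simp [hk]
      rw [hk]; ring
    rw [this, norm_div, norm_pow, ha, one_pow, div_one]
    calc ‖Q.eval (g^[n] z) - b * ∑ k ∈ Finset.range n, a ^ k‖
        ≤ ‖Q.eval (g^[n] z)‖
          + ‖b * ∑ k ∈ Finset.range n, a ^ k‖ := norm_sub_le _ _
      _ ≤ _ := add_le_add_right (hCb n) _
  intro z
  rw [tendsto_abs_iff_eval Q hQ (fun n => f^[n] z),
      tendsto_abs_iff_eval Q hQ (fun n => g^[n] z)]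
  constructor
  · intro h
    refine tendsto_atTop_mono (fun n => ?_) (tendsto_atTop_add_const_right atTop (-C) h)
    have := hbd2 n z
    linarith
  · intro h
    refine tendsto_atTop_mono (fun n => ?_) (tendsto_atTop_add_const_right atTop (-C) h)
    have := hbd1 n z
    linarith
end

section
/- Let f, g : ℂ → ℂ commute, Q a non-constant complex polynomial, and Q(g(z)) = a·Q(f(z)) + b for all z, with |a| = 1 and a ≠ 1. Then K(f) = K(g): the orbit (f^n(z)) is bounded if and only if the orbit (g^n(z)) is bounded. -/
open Bornology Filter

private lemma sublevel_bounded (Q : Polynomial ℂ) (hQ : 0 < Q.natDegree) (D : ℝ) :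
    IsBounded {w : ℂ | ‖Q.eval w‖ ≤ D} := by
  have hdeg : 0 < Q.degree := Polynomial.natDegree_pos_iff_degree_pos.mp hQ
  have htend : Tendsto (fun w : ℂ => ‖Q.eval w‖) (cobounded ℂ) atTop :=
    Q.tendsto_norm_atTop hdeg tendsto_norm_cobounded_atTop
  have hev : ∀ᶠ w in cobounded ℂ, D < ‖Q.eval w‖ := htend.eventually (eventually_gt_atTop D)
  rw [isBounded_def]
  refine Filter.mem_of_superset hev ?_
  intro w hw
  simp only [Set.mem_compl_iff, Set.mem_setOf_eq, not_le]
  exact hw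

private lemma forward_dir (f g : ℂ → ℂ) (hcomm : f ∘ g = g ∘ f)
    (Q : Polynomial ℂ) (hQ : 0 < Q.natDegree) (a b : ℂ)
    (ha : ‖a‖ = 1) (ha1 : a ≠ 1)
    (hrel : ∀ z, Q.eval (g z) = a * Q.eval (f z) + b) (z : ℂ)
    (hf : IsBounded (Set.range fun n => f^[n] z)) :
    IsBounded (Set.range fun n => g^[n] z) := by
  have hC : Function.Commute f g := fun x => congrFun hcomm x
  -- key identity
  have key : ∀ n : ℕ, ∀ w : ℂ,
      Q.eval (g^[n] w) = a ^ n * Q.eval (f^[n] w) + b * (a ^ n - 1) / (a - 1) := by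
    intro n
    induction n with
    | zero => intro w; simp
    | succ n ih =>
      intro w
      have hcomm' : f (g^[n] w) = g^[n] (f w) := (hC.iterate_right n) w
      calc Q.eval (g^[n+1] w) = Q.eval (g (g^[n] w)) := by
            rw [Function.iterate_succ_apply']
        _ = a * Q.eval (f (g^[n] w)) + b := hrel _
        _ = a * Q.eval (g^[n] (f w)) + b := by rw [hcomm']
        _ = a * (a ^ n * Q.eval (f^[n] (f w)) + b * (a ^ n - 1) / (a - 1)) + b := by
            rw [ih (f w)]
        _ = a ^ (n+1) * Q.eval (f^[n+1] w) + b * (a ^ (n+1) - 1) / (a - 1) := by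
            rw [Function.iterate_succ_apply]
            have hne : a - 1 ≠ 0 := sub_ne_zero.mpr ha1
            field_simp
            ring
  -- bound on Q(f^[n] z)
  obtain ⟨C, hC'⟩ := isBounded_iff_forall_norm_le.mp
    ((hf.isCompact_closure.image (Polynomial.continuous Q)).isBounded)
  have hfb : ∀ n : ℕ, ‖Q.eval (f^[n] z)‖ ≤ C := by
    intro n
    exact hC' _ ⟨f^[n] z, subset_closure ⟨n, rfl⟩, rfl⟩
  -- bound on Q(g^[n] z)
  set D := C + 2 * ‖b‖ / ‖a - 1‖ with hD
  have hgb : ∀ n : ℕ, ‖Q.eval (g^[n] z)‖ ≤ D := by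
    intro n
    have han : ‖a ^ n‖ = 1 := by
      rw [norm_pow, ha, one_pow]
    rw [key n z]
    have h1 : ‖a ^ n * Q.eval (f^[n] z)‖ ≤ C := by
      rw [norm_mul, han, one_mul]; exact hfb n
    have h2 : ‖b * (a ^ n - 1) / (a - 1)‖ ≤ 2 * ‖b‖ / ‖a - 1‖ := by
      have hle : ‖a ^ n - 1‖ ≤ 2 := by
        calc ‖a ^ n - 1‖ ≤ ‖a ^ n‖ + ‖(1 : ℂ)‖ := norm_sub_le _ _
          _ = 2 := by rw [han]; norm_num
      rw [norm_div, norm_mul, show (2 : ℝ) * ‖b‖ = ‖b‖ * 2 by ring]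
      gcongr
    calc ‖a ^ n * Q.eval (f^[n] z) + b * (a ^ n - 1) / (a - 1)‖
        ≤ ‖a ^ n * Q.eval (f^[n] z)‖ + ‖b * (a ^ n - 1) / (a - 1)‖ := norm_add_le _ _
      _ ≤ C + 2 * ‖b‖ / ‖a - 1‖ := add_le_add h1 h2
  -- conclude
  have hsub : (Set.range fun n => g^[n] z) ⊆ {w : ℂ | ‖Q.eval w‖ ≤ D} := by
    rintro _ ⟨n, rfl⟩
    exact hgb n
  exact (sublevel_bounded Q hQ D).subset hsub

theorem filled_julia_eq_poly (f g : ℂ → ℂ) (hcomm : f ∘ g = g ∘ f)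
    (Q : Polynomial ℂ) (hQ : 0 < Q.natDegree) (a b : ℂ)
    (ha : ‖a‖ = 1) (ha1 : a ≠ 1)
    (hrel : ∀ z, Q.eval (g z) = a * Q.eval (f z) + b) :
    ∀ z : ℂ,
      Bornology.IsBounded (Set.range fun n => f^[n] z) ↔
      Bornology.IsBounded (Set.range fun n => g^[n] z) := by
  intro z
  have ha0 : a ≠ 0 := by
    intro h; rw [h] at ha; simp at ha
  constructor
  · exact forward_dir f g hcomm Q hQ a b ha ha1 hrel z
  · apply forward_dir g f hcomm.symm Q hQ a⁻¹ (-a⁻¹ * b)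
    · rw [norm_inv, ha]; norm_num
    · exact fun h => ha1 (inv_eq_one.mp h)
    · intro w
      rw [hrel w]
      field_simp
      ring
end

section
/- Let f, g : ℂ → ℂ commute, Q a non-constant complex polynomial, and Q(g(z)) = a·Q(f(z)) + b for all z, with |a| = 1 and a ≠ 1. Then BU(f) = BU(g): the orbit of z under f has both a bounded subsequence and a subsequence tending to infinity if and only if the same holds for the orbit under g. -/
open Filter Bornology

-- Q-values bounded implies points bounded, for nonconstant Q
lemma poly_bdd_of (Q : Polynomial ℂ) (hQ : 0 < Q.natDegree) (u : ℕ → ℂ) (B : ℝ)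
    (h : ∀ k, ‖Q.eval (u k)‖ ≤ B) : IsBounded (Set.range u) := by
  have hdeg : 0 < Q.degree := Polynomial.natDegree_pos_iff_degree_pos.mp hQ
  have ht : Tendsto (fun w : ℂ => ‖Q.eval w‖) (cobounded ℂ) atTop :=
    Q.tendsto_norm_atTop hdeg tendsto_norm_cobounded_atTop
  have hev : ∀ᶠ w in cobounded ℂ, B < ‖Q.eval w‖ := ht.eventually (eventually_gt_atTop B)
  have hb : IsBounded {w : ℂ | B < ‖Q.eval w‖}ᶜ :=
    IsCobounded.compl (by exact hev)
  refine hb.subset ?_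
  rintro x ⟨k, rfl⟩
  simp only [Set.mem_compl_iff, Set.mem_setOf_eq, not_lt]
  exact h k

-- points bounded implies Q-values bounded
lemma poly_bdd_to (Q : Polynomial ℂ) (u : ℕ → ℂ)
    (h : IsBounded (Set.range u)) : ∃ B, ∀ k, ‖Q.eval (u k)‖ ≤ B := by
  obtain ⟨R, hR⟩ := isBounded_iff_forall_norm_le.mp h
  obtain ⟨B, hB⟩ := (isCompact_closedBall (0:ℂ) R).exists_bound_of_continuousOn
    (Q.continuous.continuousOn (s := Metric.closedBall 0 R))
  exact ⟨B, fun k => hB (u k) (by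
    simpa [Metric.mem_closedBall, dist_eq_norm] using hR (u k) ⟨k, rfl⟩)⟩

-- Q-values tending to infinity implies points tend to infinity
lemma poly_tend_of (Q : Polynomial ℂ) (u : ℕ → ℂ)
    (h : Tendsto (fun k => ‖Q.eval (u k)‖) atTop atTop) :
    Tendsto (fun k => ‖u k‖) atTop atTop := by
  rw [tendsto_atTop]
  intro M
  obtain ⟨B, hB⟩ := (isCompact_closedBall (0:ℂ) (max M 0)).exists_bound_of_continuousOn
    (Q.continuous.continuousOn (s := Metric.closedBall 0 (max M 0)))
  filter_upwards [h.eventually (eventually_gt_atTop B)] with k hk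
  by_contra hlt
  push_neg at hlt
  exact absurd (hB (u k) (by
    simp only [Metric.mem_closedBall, dist_eq_norm, sub_zero]
    exact le_trans hlt.le (le_max_left _ _))) (not_le.mpr hk)

lemma bungee_key (f g : ℂ → ℂ) (hcomm : f ∘ g = g ∘ f)
    (Q : Polynomial ℂ) (a b : ℂ) (ha1 : a ≠ 1)
    (hrel : ∀ z, Q.eval (g z) = a * Q.eval (f z) + b) :
    ∀ n z, Q.eval (g^[n] z) = a ^ n * Q.eval (f^[n] z) + b * (a ^ n - 1) / (a - 1) := by
  have hc : Function.Commute f g := funext_iff.mp hcomm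
  have hane : a - 1 ≠ 0 := sub_ne_zero.mpr ha1
  intro n
  induction n with
  | zero => intro z; simp
  | succ n ih =>
    intro z
    have h1 : f (g^[n] z) = g^[n] (f z) := (hc.iterate_right n) z
    rw [Function.iterate_succ_apply' g, hrel, h1, ih (f z), ← Function.iterate_succ_apply]
    field_simp
    ring

lemma bungee_bound (f g : ℂ → ℂ) (hcomm : f ∘ g = g ∘ f)
    (Q : Polynomial ℂ) (a b : ℂ) (ha : ‖a‖ = 1) (ha1 : a ≠ 1)
    (hrel : ∀ z, Q.eval (g z) = a * Q.eval (f z) + b) :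
    ∀ n z, |‖Q.eval (g^[n] z)‖ - ‖Q.eval (f^[n] z)‖|
        ≤ 2 * ‖b‖ / ‖a - 1‖ := by
  intro n z
  have key := bungee_key f g hcomm Q a b ha1 hrel n z
  have han : ‖a ^ n‖ = 1 := by rw [norm_pow, ha, one_pow]
  have h2 : ‖a ^ n * Q.eval (f^[n] z)‖ = ‖Q.eval (f^[n] z)‖ := by
    rw [norm_mul]
    simp [ha]
  calc |‖Q.eval (g^[n] z)‖ - ‖Q.eval (f^[n] z)‖|
      = |‖Q.eval (g^[n] z)‖ - ‖a ^ n * Q.eval (f^[n] z)‖| := by rw [h2]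
    _ ≤ ‖Q.eval (g^[n] z) - a ^ n * Q.eval (f^[n] z)‖ := abs_norm_sub_norm_le _ _
    _ = ‖b * (a ^ n - 1) / (a - 1)‖ := by
        rw [key]; ring_nf
    _ ≤ 2 * ‖b‖ / ‖a - 1‖ := by
        rw [norm_div, norm_mul]
        have hpos : (0:ℝ) < ‖a - 1‖ := by
          simpa using sub_ne_zero.mpr ha1
        gcongr ?_ / _
        calc ‖b‖ * ‖a ^ n - 1‖
            ≤ ‖b‖ * (‖a ^ n‖ + ‖1‖) :=
              mul_le_mul_of_nonneg_left (norm_sub_le _ _)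
                (norm_nonneg b)
          _ = 2 * ‖b‖ := by rw [han, norm_one]; ring

lemma bungee_half (f g : ℂ → ℂ) (hcomm : f ∘ g = g ∘ f)
    (Q : Polynomial ℂ) (hQ : 0 < Q.natDegree) (a b : ℂ)
    (ha : ‖a‖ = 1) (ha1 : a ≠ 1)
    (hrel : ∀ z, Q.eval (g z) = a * Q.eval (f z) + b) (z : ℂ) :
    ((∃ m : ℕ → ℕ, StrictMono m ∧
        Bornology.IsBounded (Set.range fun k => f^[m k] z)) ∧
     (∃ n : ℕ → ℕ, StrictMono n ∧
        Filter.Tendsto (fun k => ‖f^[n k] z‖) Filter.atTop Filter.atTop)) →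
    ((∃ m : ℕ → ℕ, StrictMono m ∧
        Bornology.IsBounded (Set.range fun k => g^[m k] z)) ∧
     (∃ n : ℕ → ℕ, StrictMono n ∧
        Filter.Tendsto (fun k => ‖g^[n k] z‖) Filter.atTop Filter.atTop)) := by
  set C := 2 * ‖b‖ / ‖a - 1‖ with hC
  have hbd := bungee_bound f g hcomm Q a b ha ha1 hrel
  rintro ⟨⟨m, hm, hmb⟩, ⟨n, hn, hnt⟩⟩
  constructor
  · refine ⟨m, hm, ?_⟩
    obtain ⟨B, hB⟩ := poly_bdd_to Q (fun k => f^[m k] z) hmb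
    refine poly_bdd_of Q hQ _ (B + C) fun k => ?_
    have h1 := hbd (m k) z
    have h2 := hB k
    have := abs_sub_le_iff.mp h1
    linarith [this.1]
  · refine ⟨n, hn, ?_⟩
    have hdeg : 0 < Q.degree := Polynomial.natDegree_pos_iff_degree_pos.mp hQ
    have hnt' : Filter.Tendsto (fun k => ‖f^[n k] z‖) Filter.atTop Filter.atTop := by
      simpa using hnt
    have hQt : Filter.Tendsto (fun k => ‖Q.eval (f^[n k] z)‖) Filter.atTop Filter.atTop :=
      Q.tendsto_norm_atTop hdeg hnt'
    have hQg : Filter.Tendsto (fun k => ‖Q.eval (g^[n k] z)‖) Filter.atTop Filter.atTop := by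
      refine Filter.tendsto_atTop_mono (fun k => ?_)
        (Filter.tendsto_atTop_add_const_right _ (-C) hQt)
      have := (abs_sub_le_iff.mp (hbd (n k) z)).2
      linarith
    have := poly_tend_of Q _ hQg
    simpa using this

theorem bungee_eq_poly (f g : ℂ → ℂ) (hcomm : f ∘ g = g ∘ f)
    (Q : Polynomial ℂ) (hQ : 0 < Q.natDegree) (a b : ℂ)
    (ha : ‖a‖ = 1) (ha1 : a ≠ 1)
    (hrel : ∀ z, Q.eval (g z) = a * Q.eval (f z) + b) :
    ∀ z : ℂ,
      ((∃ m : ℕ → ℕ, StrictMono m ∧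
          Bornology.IsBounded (Set.range fun k => f^[m k] z)) ∧
       (∃ n : ℕ → ℕ, StrictMono n ∧
          Filter.Tendsto (fun k => ‖f^[n k] z‖) Filter.atTop Filter.atTop)) ↔
      ((∃ m : ℕ → ℕ, StrictMono m ∧
          Bornology.IsBounded (Set.range fun k => g^[m k] z)) ∧
       (∃ n : ℕ → ℕ, StrictMono n ∧
          Filter.Tendsto (fun k => ‖g^[n k] z‖) Filter.atTop Filter.atTop)) := by
  intro z
  have ha0 : a ≠ 0 := by
    intro h; rw [h] at ha; simp at ha
  constructor
  · exact bungee_half f g hcomm Q hQ a b ha ha1 hrel z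
  · refine bungee_half g f hcomm.symm Q hQ a⁻¹ (-(a⁻¹ * b)) ?_ ?_ ?_ z
    · rw [norm_inv, ha, inv_one]
    · intro h
      apply ha1
      rw [← inv_inv a, h, inv_one]
    · intro w
      have := hrel w
      field_simp
      linear_combination -this
end
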